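/- arXiv:gr-qc/0309115 — 2 statements merged into one kernel-verified Lean document; each statement's English description precedes it below -/
import Mathlib

section
/- Let x : [V,∞) → ℝ satisfy |x(v)| ≤ ∫_V^v (|θ(v*)|/r₁) e^{−c(v−v*)} dv* + A e^{−c(v−V)} with c, r₁ > 0, A ≥ 0, and suppose ∫_V^∞ θ²(v*) dv* ≤ E. Then for all v ≥ V: |x(v)| ≤ r₁⁻¹ √E · (2c)^{−1/2} + A e^{−c(v−V)}. In particular if additionally v − V ≥ c⁻¹ log D for some D > 1 then |x(v)| ≤ r₁⁻¹ √E (2c)^{−1/2} + A/D. -/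
open Real MeasureTheory intervalIntegral

-- AM-GM optimization lemma
lemma aux_amgm (I E M : ℝ) (hE : 0 ≤ E) (hM : 0 < M)
    (h : ∀ l : ℝ, 0 < l → I ≤ (l * E + l⁻¹ * M) / 2) : I ≤ Real.sqrt (E * M) := by
  rcases eq_or_lt_of_le hE with hE0 | hE0
  · -- E = 0
    have h0 : Real.sqrt (E * M) = 0 := by rw [← hE0]; simp
    rw [h0]
    by_contra h'
    push_neg at h'
    have hl : 0 < 2 * M / I := by positivity
    have := h (2 * M / I) hl
    have hinv : (2 * M / I)⁻¹ = I / (2 * M) := by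
      rw [inv_div]
    rw [hinv, ← hE0] at this
    have : I ≤ I / 4 := by
      calc I ≤ (2 * M / I * 0 + I / (2 * M) * M) / 2 := this
        _ = I / 4 := by field_simp; ring
    linarith
  · -- E > 0
    have hl : 0 < Real.sqrt (M / E) := Real.sqrt_pos.mpr (by positivity)
    have h1 : Real.sqrt (M / E) * E = Real.sqrt (E * M) := by
      rw [Real.sqrt_div hM.le, div_mul_eq_mul_div, mul_div_assoc, Real.div_sqrt,
        ← Real.sqrt_mul hM.le, mul_comm M E]
    have h2 : (Real.sqrt (M / E))⁻¹ * M = Real.sqrt (E * M) := by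
      rw [Real.sqrt_div hM.le, inv_div, div_mul_eq_mul_div, mul_div_assoc, Real.div_sqrt,
        ← Real.sqrt_mul hE]
    have := h _ hl
    rw [h1, h2] at this
    linarith

-- exponential integral bound
lemma aux_expint (c V v : ℝ) (hc : 0 < c) (_hv : V ≤ v) :
    (∫ s in V..v, Real.exp (-(2 * c) * (v - s))) ≤ (2 * c)⁻¹ := by
  have hderiv : ∀ s ∈ Set.uIcc V v, HasDerivAt
      (fun s => (2 * c)⁻¹ * Real.exp (-(2 * c) * (v - s)))
      (Real.exp (-(2 * c) * (v - s))) s := by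
    intro s _
    have h1 : HasDerivAt (fun s : ℝ => -(2 * c) * (v - s)) (2 * c) s := by
      have := ((hasDerivAt_id s).const_sub v).const_mul (-(2 * c))
      simpa using this
    have h2 := h1.exp
    have h3 := h2.const_mul ((2 * c)⁻¹)
    have h2c0 : (2 * c) ≠ 0 := by positivity
    rwa [mul_comm (Real.exp _) (2 * c), ← mul_assoc, inv_mul_cancel₀ h2c0, one_mul] at h3
  have hint : IntervalIntegrable (fun s => Real.exp (-(2 * c) * (v - s))) volume V v :=
    (Continuous.intervalIntegrable (by continuity) V v)
  rw [intervalIntegral.integral_eq_sub_of_hasDerivAt hderiv hint]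
  have e1 : Real.exp (-(2 * c) * (v - v)) = 1 := by simp
  have e2 : 0 < Real.exp (-(2 * c) * (v - V)) := Real.exp_pos _
  have h2c : 0 < (2 * c)⁻¹ := by positivity
  nlinarith

/-- Combining the red-shift estimate with Cauchy–Schwarz and the energy bound:
    pointwise bound on x, with quantitative smallness after advanced time
    c⁻¹ log D. -/
theorem stmt_4 (V c r₁ A E : ℝ) (x θ : ℝ → ℝ)
    (hc : 0 < c) (hr₁ : 0 < r₁) (hA : 0 ≤ A) (hE : 0 ≤ E)
    (hθint : ∀ v, V ≤ v → IntervalIntegrable θ MeasureTheory.volume V v)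
    (hθsq : ∀ v, V ≤ v → IntervalIntegrable (fun s => (θ s) ^ 2) MeasureTheory.volume V v)
    (hEbound : ∀ v, V ≤ v → (∫ s in V..v, (θ s) ^ 2) ≤ E)
    (hbound : ∀ v, V ≤ v →
      |x v| ≤ (∫ s in V..v, (|θ s| / r₁) * Real.exp (-c * (v - s))) +
        A * Real.exp (-c * (v - V))) :
    (∀ v, V ≤ v →
      |x v| ≤ r₁⁻¹ * Real.sqrt E * (Real.sqrt (2 * c))⁻¹ +
        A * Real.exp (-c * (v - V))) ∧
    (∀ v D, V ≤ v → 1 < D → c⁻¹ * Real.log D ≤ v - V →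
      |x v| ≤ r₁⁻¹ * Real.sqrt E * (Real.sqrt (2 * c))⁻¹ + A / D) := by
  -- main integral bound
  have key : ∀ v, V ≤ v →
      (∫ s in V..v, (|θ s| / r₁) * Real.exp (-c * (v - s))) ≤
        r₁⁻¹ * Real.sqrt E * (Real.sqrt (2 * c))⁻¹ := by
    intro v hv
    have hIint : IntervalIntegrable (fun s => |θ s| * Real.exp (-c * (v - s))) volume V v := by
      have := (hθint v hv).abs
      exact this.mul_continuousOn (Continuous.continuousOn (by continuity))
    have hexpint : IntervalIntegrable (fun s => Real.exp (-(2 * c) * (v - s))) volume V v :=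
      Continuous.intervalIntegrable (by continuity) V v
    set I := ∫ s in V..v, |θ s| * Real.exp (-c * (v - s)) with hI
    have hIbound : I ≤ Real.sqrt (E * (2 * c)⁻¹) := by
      apply aux_amgm _ _ _ hE (by positivity)
      intro l hl
      have hpt : ∀ s ∈ Set.Icc V v,
          |θ s| * Real.exp (-c * (v - s)) ≤
            (l * (θ s) ^ 2 + l⁻¹ * Real.exp (-(2 * c) * (v - s))) / 2 := by
        intro s _
        have hab : Real.exp (-(2 * c) * (v - s)) = (Real.exp (-c * (v - s))) ^ 2 := by
          rw [sq, ← Real.exp_add]; ring_nf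
        rw [hab]
        have hli : l * l⁻¹ = 1 := mul_inv_cancel₀ (ne_of_gt hl)
        have hn := mul_nonneg (le_of_lt (inv_pos.mpr hl))
          (sq_nonneg (l * |θ s| - Real.exp (-c * (v - s))))
        have hsqabs : |θ s| ^ 2 = (θ s) ^ 2 := sq_abs _
        have hid : ∀ a b : ℝ, l⁻¹ * (l * a - b) ^ 2 =
            l * a ^ 2 - 2 * (a * b) + l⁻¹ * b ^ 2 := by
          intro a b; field_simp; ring
        rw [hid, hsqabs] at hn
        linarith
      have hmono : I ≤ ∫ s in V..v,
          (l * (θ s) ^ 2 + l⁻¹ * Real.exp (-(2 * c) * (v - s))) / 2 := by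
        apply intervalIntegral.integral_mono_on hv hIint _ hpt
        apply IntervalIntegrable.div_const
        exact ((hθsq v hv).const_mul l).add (hexpint.const_mul l⁻¹)
      have hsplit : (∫ s in V..v,
          (l * (θ s) ^ 2 + l⁻¹ * Real.exp (-(2 * c) * (v - s))) / 2) =
          ((l * ∫ s in V..v, (θ s) ^ 2) + l⁻¹ * ∫ s in V..v, Real.exp (-(2 * c) * (v - s))) / 2 := by
        rw [intervalIntegral.integral_div, intervalIntegral.integral_add
          ((hθsq v hv).const_mul l) (hexpint.const_mul l⁻¹),
          intervalIntegral.integral_const_mul, intervalIntegral.integral_const_mul]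
      rw [hsplit] at hmono
      have h1 := hEbound v hv
      have h2 := aux_expint c V v hc hv
      have hl' : 0 ≤ l⁻¹ := le_of_lt (inv_pos.mpr hl)
      calc I ≤ ((l * ∫ s in V..v, (θ s) ^ 2) + l⁻¹ * ∫ s in V..v, Real.exp (-(2 * c) * (v - s))) / 2 := hmono
        _ ≤ (l * E + l⁻¹ * (2 * c)⁻¹) / 2 := by
            have ha := mul_le_mul_of_nonneg_left h1 (le_of_lt hl)
            have hb := mul_le_mul_of_nonneg_left h2 hl'
            linarith
    have heq : (∫ s in V..v, (|θ s| / r₁) * Real.exp (-c * (v - s))) = r₁⁻¹ * I := by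
      rw [hI, ← intervalIntegral.integral_const_mul]
      congr 1; ext s; field_simp
    rw [heq]
    have hsq : Real.sqrt (E * (2 * c)⁻¹) = Real.sqrt E * (Real.sqrt (2 * c))⁻¹ := by
      rw [Real.sqrt_mul hE, Real.sqrt_inv]
    calc r₁⁻¹ * I ≤ r₁⁻¹ * Real.sqrt (E * (2 * c)⁻¹) := by
          apply mul_le_mul_of_nonneg_left hIbound (by positivity)
      _ = r₁⁻¹ * Real.sqrt E * (Real.sqrt (2 * c))⁻¹ := by rw [hsq, mul_assoc]
  have part1 : ∀ v, V ≤ v →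
      |x v| ≤ r₁⁻¹ * Real.sqrt E * (Real.sqrt (2 * c))⁻¹ + A * Real.exp (-c * (v - V)) := by
    intro v hv
    calc |x v| ≤ (∫ s in V..v, (|θ s| / r₁) * Real.exp (-c * (v - s))) +
        A * Real.exp (-c * (v - V)) := hbound v hv
      _ ≤ r₁⁻¹ * Real.sqrt E * (Real.sqrt (2 * c))⁻¹ + A * Real.exp (-c * (v - V)) :=
          add_le_add_left (key v hv) _
  refine ⟨part1, ?_⟩
  intro v D hv hD hlog
  have hDpos : 0 < D := lt_trans one_pos hD
  have hexp : Real.exp (-c * (v - V)) ≤ 1 / D := by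
    have h1 : Real.log D ≤ c * (v - V) := by
      have := mul_le_mul_of_nonneg_left hlog (le_of_lt hc)
      rwa [← mul_assoc, mul_inv_cancel₀ (ne_of_gt hc), one_mul] at this
    have : -c * (v - V) ≤ -Real.log D := by linarith
    calc Real.exp (-c * (v - V)) ≤ Real.exp (-Real.log D) := Real.exp_le_exp.mpr this
      _ = 1 / D := by rw [Real.exp_neg, Real.exp_log hDpos, one_div]
  calc |x v| ≤ r₁⁻¹ * Real.sqrt E * (Real.sqrt (2 * c))⁻¹ + A * Real.exp (-c * (v - V)) :=
        part1 v hv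
    _ ≤ r₁⁻¹ * Real.sqrt E * (Real.sqrt (2 * c))⁻¹ + A * (1 / D) := by gcongr
    _ = r₁⁻¹ * Real.sqrt E * (Real.sqrt (2 * c))⁻¹ + A / D := by ring
end

section
/- Let h > 1, 0 < p < 1, and define v̂ᵢ = hⁱ for integers i ≥ 0. Suppose f : [1,∞) → ℝ is nondecreasing with f(h v) − f(v) ≤ C v^{−2w} for all v ≥ 1, where C, w > 0. Then for each i there exist points ṽᵢ < vᵢ in [v̂ᵢ, v̂_{i+1}] with (h−1)v̂ᵢ^p /4 ≤ vᵢ − ṽᵢ and f(vᵢ) − f(ṽᵢ) ≤ 2C v̂ᵢ^{−2w−1+p}; consequently, vᵢ ≤ h² v̂ᵢ gives f(vᵢ) − f(ṽᵢ) ≤ 2 h^{2w+1−p} C vᵢ^{−2w−1+p}. -/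
lemma stmt_13_aux (h p C w V : ℝ) (f : ℝ → ℝ)
    (hh : 1 < h) (hp0 : 0 < p) (hp1 : p < 1) (hC : 0 < C) (hw : 0 < w)
    (hV1 : 1 ≤ V)
    (hflux : f (h * V) - f V ≤ C * V ^ (-(2 * w))) :
    ∃ vt vi : ℝ,
      vt ∈ Set.Icc V (h * V) ∧
      vi ∈ Set.Icc V (h * V) ∧
      vt < vi ∧
      (h - 1) * V ^ p / 4 ≤ vi - vt ∧
      f vi - f vt ≤ 2 * C * V ^ (-(2 * w) - 1 + p) ∧
      vi ≤ h ^ 2 * V ∧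
      f vi - f vt ≤ 2 * h ^ (2 * w + 1 - p) * C * vi ^ (-(2 * w) - 1 + p) := by
  have hh0 : (0:ℝ) < h := lt_trans one_pos hh
  have hVpos : (0:ℝ) < V := lt_of_lt_of_le one_pos hV1
  obtain ⟨x, hxdef⟩ : ∃ x : ℝ, x = V ^ (1 - p) := ⟨_, rfl⟩
  have hx1 : (1:ℝ) ≤ x := hxdef ▸ Real.one_le_rpow hV1 (by linarith)
  obtain ⟨N, hNdef⟩ : ∃ N : ℕ, N = ⌊x⌋₊ := ⟨_, rfl⟩
  have hN1 : 1 ≤ N := hNdef ▸ Nat.le_floor (by exact_mod_cast hx1)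
  have hNpos : (0:ℝ) < (N:ℝ) := by exact_mod_cast hN1
  have hNx : (N:ℝ) ≤ x := hNdef ▸ Nat.floor_le (by linarith)
  have hN1r : (1:ℝ) ≤ (N:ℝ) := by exact_mod_cast hN1
  have hxN : x ≤ 2 * (N:ℝ) := by
    have h1 : x < (⌊x⌋₊:ℝ) + 1 := Nat.lt_floor_add_one x
    rw [← hNdef] at h1
    linarith
  obtain ⟨L, hLdef⟩ : ∃ L : ℝ, L = (h - 1) * V / N := ⟨_, rfl⟩
  have hLpos : 0 < L := hLdef ▸ div_pos (by nlinarith) hNpos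
  have hNL : (N:ℝ) * L = (h - 1) * V := by
    rw [hLdef, mul_div_cancel₀ _ (ne_of_gt hNpos)]
  -- telescoping sum / pigeonhole
  have htel : ∑ k ∈ Finset.range N, (f (V + ((k:ℝ)+1) * L) - f (V + k * L))
      = f (h * V) - f V := by
    have h0 : ∀ k : ℕ, f (V + ((k:ℝ)+1) * L) = f (V + ((k+1 : ℕ):ℝ) * L) := by
      intro k; push_cast; ring_nf
    simp_rw [h0]
    rw [Finset.sum_range_sub (fun k : ℕ => f (V + (k:ℝ) * L))]
    have : V + (N:ℝ) * L = h * V := by rw [hNL]; ring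
    rw [this]
    norm_num
  have hsum_le : ∑ k ∈ Finset.range N, (f (V + ((k:ℝ)+1) * L) - f (V + k * L))
      ≤ ∑ _k ∈ Finset.range N, C * V ^ (-(2 * w)) / N := by
    rw [htel, Finset.sum_const, Finset.card_range, nsmul_eq_mul]
    have hc : (N:ℝ) * (C * V ^ (-(2 * w)) / N) = C * V ^ (-(2 * w)) := by
      field_simp
    rw [hc]
    exact hflux
  obtain ⟨k, hk, hkle⟩ := Finset.exists_le_of_sum_le ⟨0, Finset.mem_range.mpr hN1⟩ hsum_le
  have hkN : k < N := Finset.mem_range.mp hk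
  have hkNr : (k:ℝ) + 1 ≤ (N:ℝ) := by exact_mod_cast hkN
  have hk0 : (0:ℝ) ≤ (k:ℝ) := Nat.cast_nonneg k
  -- the key averaged flux bound
  have keyN : C * V ^ (-(2 * w)) / N ≤ 2 * C * V ^ (-(2 * w) - 1 + p) := by
    rw [div_le_iff₀ hNpos]
    have hVe : V ^ (-(2 * w) - 1 + p) * x = V ^ (-(2 * w)) := by
      rw [hxdef, ← Real.rpow_add hVpos]
      ring_nf
    have hVepos : (0:ℝ) < V ^ (-(2 * w) - 1 + p) := Real.rpow_pos_of_pos hVpos _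
    calc C * V ^ (-(2 * w)) = C * (V ^ (-(2 * w) - 1 + p) * x) := by rw [hVe]
      _ ≤ C * (V ^ (-(2 * w) - 1 + p) * (2 * N)) := by
          exact mul_le_mul_of_nonneg_left
            (mul_le_mul_of_nonneg_left hxN hVepos.le) hC.le
      _ = 2 * C * V ^ (-(2 * w) - 1 + p) * N := by ring
  have hfluxk : f (V + ((k:ℝ)+1) * L) - f (V + (k:ℝ) * L)
      ≤ 2 * C * V ^ (-(2 * w) - 1 + p) := le_trans hkle keyN
  clear hkle hsum_le htel hflux hk keyN
  have hkL0 : 0 ≤ (k:ℝ) * L := mul_nonneg hk0 hLpos.le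
  have hkL_le : (k:ℝ) * L ≤ (h - 1) * V := by
    rw [← hNL]
    exact mul_le_mul_of_nonneg_right (by linarith) hLpos.le
  have hk1L_le : ((k:ℝ) + 1) * L ≤ (h - 1) * V := by
    rw [← hNL]
    exact mul_le_mul_of_nonneg_right hkNr hLpos.le
  refine ⟨V + (k:ℝ) * L, V + ((k:ℝ)+1) * L, ?_, ?_, ?_, ?_, hfluxk, ?_, ?_⟩
  · constructor
    · linarith
    · linarith
  · constructor
    · nlinarith
    · linarith
  · nlinarith
  · -- length lower bound
    have hVp : (0:ℝ) < V ^ p := Real.rpow_pos_of_pos hVpos p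
    have hVsplit : V ^ p * x = V := by
      rw [hxdef, ← Real.rpow_add hVpos]
      norm_num
    have hL_ge : (h - 1) * V ^ p ≤ L := by
      rw [hLdef, le_div_iff₀ hNpos]
      calc (h - 1) * V ^ p * (N:ℝ) ≤ (h - 1) * V ^ p * x :=
            mul_le_mul_of_nonneg_left hNx (mul_nonneg (by linarith) hVp.le)
        _ = (h - 1) * V := by rw [mul_assoc, hVsplit]
    have h4 : (0:ℝ) ≤ (h - 1) * V ^ p := mul_nonneg (by linarith) hVp.le
    linarith
  · -- vi ≤ h^2 V
    have h5 : (0:ℝ) ≤ h * V * (h - 1) :=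
      mul_nonneg (mul_pos hh0 hVpos).le (by linarith)
    nlinarith [hk1L_le, h5]
  · -- final bound
    obtain ⟨e, hedef⟩ : ∃ e : ℝ, e = -(2 * w) - 1 + p := ⟨_, rfl⟩
    rw [← hedef] at hfluxk ⊢
    have he : e ≤ 0 := by rw [hedef]; linarith
    obtain ⟨vi, hvidef⟩ : ∃ vi : ℝ, vi = V + ((k:ℝ)+1) * L := ⟨_, rfl⟩
    rw [← hvidef] at hfluxk ⊢
    have hvipos : (0:ℝ) < vi := by rw [hvidef]; linarith
    have hvile : vi ≤ h * V := by rw [hvidef]; linarith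
    have h1 : (h * V) ^ e ≤ vi ^ e :=
      Real.rpow_le_rpow_of_nonpos hvipos hvile he
    have h2 : (h * V) ^ e = h ^ e * V ^ e := Real.mul_rpow hh0.le hVpos.le
    have h3 : h ^ (2 * w + 1 - p) * h ^ e = 1 := by
      rw [← Real.rpow_add hh0, hedef]
      norm_num
    have hhe : (0:ℝ) < h ^ (2 * w + 1 - p) := Real.rpow_pos_of_pos hh0 _
    have key : 2 * C * V ^ e ≤ 2 * h ^ (2 * w + 1 - p) * C * vi ^ e := by
      calc 2 * C * V ^ e = 2 * C * (h ^ (2 * w + 1 - p) * h ^ e * V ^ e) := by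
            rw [h3]; ring
        _ = 2 * h ^ (2 * w + 1 - p) * C * ((h * V) ^ e) := by rw [h2]; ring
        _ ≤ 2 * h ^ (2 * w + 1 - p) * C * vi ^ e :=
            mul_le_mul_of_nonneg_left h1 (by positivity)
    linarith

/-- Dyadic pigeonhole along the event horizon (Lemma 9.1, mass part):
    in each dyadic interval [hⁱ, hⁱ⁺¹] there is a subinterval of length
    ≳ (h−1)hⁱᵖ/4 capturing flux at most 2C hⁱ^{−2w−1+p}, hence
    ≤ 2 h^{2w+1−p} C vᵢ^{−2w−1+p}. -/
theorem stmt_13 (h p C w : ℝ) (f : ℝ → ℝ)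
    (hh : 1 < h) (hp0 : 0 < p) (hp1 : p < 1) (hC : 0 < C) (hw : 0 < w)
    (hmono : MonotoneOn f (Set.Ici 1))
    (hflux : ∀ v, 1 ≤ v → f (h * v) - f v ≤ C * v ^ (-(2 * w))) :
    ∀ i : ℕ, ∃ vt vi : ℝ,
      vt ∈ Set.Icc ((h : ℝ) ^ i) ((h : ℝ) ^ (i + 1)) ∧
      vi ∈ Set.Icc ((h : ℝ) ^ i) ((h : ℝ) ^ (i + 1)) ∧
      vt < vi ∧
      (h - 1) * ((h : ℝ) ^ i) ^ p / 4 ≤ vi - vt ∧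
      f vi - f vt ≤ 2 * C * ((h : ℝ) ^ i) ^ (-(2 * w) - 1 + p) ∧
      vi ≤ h ^ 2 * (h : ℝ) ^ i ∧
      f vi - f vt ≤ 2 * h ^ (2 * w + 1 - p) * C * vi ^ (-(2 * w) - 1 + p) := by
  intro i
  have hV1 : (1:ℝ) ≤ (h:ℝ) ^ i := one_le_pow₀ hh.le
  have hsucc : (h:ℝ) ^ (i + 1) = h * (h:ℝ) ^ i := by rw [pow_succ]; ring
  rw [hsucc]
  exact stmt_13_aux h p C w ((h:ℝ)^i) f hh hp0 hp1 hC hw hV1 (hflux _ hV1)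
end
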